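/- The stabilizer in S(n) of the ordered normal simplex ∇₂^{m-1} of the second type, whose i-th vertex (i = 1,...,m) is the determinant cross ratio obtained from e_{(1,...,m-1);m,m+1,m+2,m+3} by transposing i and m, equals the subgroup S({m+4,...,n}) ⊂ S(n) of permutations fixing 1,...,m+3 pointwise. -/

import Mathlib

/-- The affine determinant `d_{a_1,...,a_{m+1}}(q)` for points `q_i ∈ ℂ^m`. -/
noncomputable def dA {n m : ℕ} (q : Fin n → Fin m → ℂ) (a : Fin (m + 1) → Fin n) : ℂ :=
  (Matrix.of (fun r c : Fin (m + 1) => Fin.snoc (q (a r)) (1 : ℂ) c)).det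

/-- `q ∈ ℰⁿ(ℂ^m, gp)`: no `m+1` of the points lie on an affine hyperplane. -/
def GenPos {n m : ℕ} (q : Fin n → Fin m → ℂ) : Prop :=
  ∀ a : Fin (m + 1) → Fin n, Function.Injective a → dA q a ≠ 0

/-- The determinant cross ratio `e_{𝐢;j,k,l,s}` for points in `ℂ^{M+1}`,
where `𝐢` has `M` entries. -/
noncomputable def ecr {n M : ℕ} (q : Fin n → Fin (M + 1) → ℂ) (i : Fin M → Fin n)
    (j k l s : Fin n) : ℂ :=
  (dA q (Fin.snoc (Fin.snoc i j) k) * dA q (Fin.snoc (Fin.snoc i l) s)) /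
  (dA q (Fin.snoc (Fin.snoc i j) l) * dA q (Fin.snoc (Fin.snoc i k) s))


open Finset in
lemma Ioi_castSucc' {N : ℕ} (i : Fin N) :
    (Finset.Ioi (i.castSucc) : Finset (Fin (N+1))) =
      insert (Fin.last N) ((Finset.Ioi i).map Fin.castSuccEmb) := by
  ext x
  refine Fin.lastCases ?_ (fun j => ?_) x
  · simp [Fin.castSucc_lt_last]
  · have hjl : j.castSucc ≠ Fin.last N := (Fin.castSucc_lt_last j).ne
    simp only [Finset.mem_Ioi, Finset.mem_insert, hjl, false_or, Finset.mem_map,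
      Fin.castSuccEmb_apply]
    constructor
    · intro h
      exact ⟨j, by simpa [Fin.castSucc_lt_castSucc_iff] using h, rfl⟩
    · rintro ⟨a, ha, hax⟩
      have : a = j := Fin.castSucc_injective _ hax
      subst this
      exact Fin.castSucc_lt_castSucc_iff.mpr ha

open Finset in
lemma VP_snoc {N : ℕ} (v : Fin N → ℂ) (x : ℂ) :
    (∏ i : Fin (N+1), ∏ j ∈ Finset.Ioi i, ((Fin.snoc v x : Fin (N+1) → ℂ) j - (Fin.snoc v x : Fin (N+1) → ℂ) i))
    = (∏ i : Fin N, ∏ j ∈ Finset.Ioi i, (v j - v i)) * ∏ i : Fin N, (x - v i) := by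
  rw [Fin.prod_univ_castSucc]
  have hlast : (Finset.Ioi (Fin.last N) : Finset (Fin (N+1))) = ∅ := by
    ext y; simp [Fin.le_last]
  rw [hlast]
  simp only [Finset.prod_empty, mul_one]
  have : ∀ i : Fin N,
      (∏ j ∈ Finset.Ioi i.castSucc, ((Fin.snoc v x : Fin (N+1) → ℂ) j - (Fin.snoc v x : Fin (N+1) → ℂ) i.castSucc))
      = (∏ j ∈ Finset.Ioi i, (v j - v i)) * (x - v i) := by
    intro i
    rw [Ioi_castSucc', Finset.prod_insert (by simp [Fin.castSuccEmb_apply]), Finset.prod_map]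
    simp only [show ∀ a : Fin N, (Fin.castSuccEmb a : Fin (N+1)) = a.castSucc from fun _ => rfl,
      Fin.snoc_castSucc, Fin.snoc_last]
    ring
  rw [Finset.prod_congr rfl (fun i _ => this i), Finset.prod_mul_distrib]


def mom {n m : ℕ} (t : Fin n → ℂ) : Fin n → Fin m → ℂ := fun i c => t i ^ (c.val + 1)

open Finset in
lemma dA_mom {n m : ℕ} (t : Fin n → ℂ) (a : Fin (m+1) → Fin n) :
    dA (mom t) a = (-1:ℂ)^m * ∏ i : Fin (m+1), ∏ j ∈ Finset.Ioi i, (t (a j) - t (a i)) := by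
  have hM : (Matrix.of (fun r c : Fin (m + 1) => Fin.snoc ((mom t : Fin n → Fin m → ℂ) (a r)) (1 : ℂ) c))
      = (Matrix.vandermonde (fun r => t (a r))).submatrix id (finRotate (m+1)) := by
    ext r c
    refine Fin.lastCases ?_ (fun c' => ?_) c
    · simp [Matrix.vandermonde, finRotate_last, mom]
    · simp only [Matrix.of_apply, Fin.snoc_castSucc, Matrix.submatrix_apply, id,
        Matrix.vandermonde_apply, mom]
      congr 1
      rw [coe_finRotate]
      simp [(Fin.castSucc_lt_last c').ne, Fin.coe_castSucc]
  rw [dA, hM, Matrix.det_permute', sign_finRotate, Matrix.det_vandermonde]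
  push_cast
  ring


noncomputable def crr (a b c d : ℂ) : ℂ := (b - a) * (d - c) / ((c - a) * (d - b))

lemma crr_swap₁ (a b c d : ℂ) : crr a b c d = crr b a d c := by
  unfold crr; ring_nf

lemma crr_swap₂ (a b c d : ℂ) : crr a b c d = crr c d a b := by
  unfold crr; ring_nf

lemma crr_inj₁ {a a' b c d : ℂ} (hbc : b ≠ c) (hbd : b ≠ d) (hcd : c ≠ d)
    (hac : a ≠ c) (ha'c : a' ≠ c) (h : crr a b c d = crr a' b c d) : a = a' := by
  unfold crr at h
  rw [div_eq_div_iff (mul_ne_zero (sub_ne_zero_of_ne (Ne.symm hac)) (sub_ne_zero_of_ne (Ne.symm hbd)))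
    (mul_ne_zero (sub_ne_zero_of_ne (Ne.symm ha'c)) (sub_ne_zero_of_ne (Ne.symm hbd)))] at h
  have key : (d - c) * (d - b) * (b - c) * (a - a') = 0 := by linear_combination h
  rcases mul_eq_zero.mp key with h1 | h1
  · rcases mul_eq_zero.mp h1 with h2 | h2
    · rcases mul_eq_zero.mp h2 with h3 | h3
      · exact absurd (sub_eq_zero.mp h3).symm hcd
      · exact absurd (sub_eq_zero.mp h3).symm hbd
    · exact absurd (sub_eq_zero.mp h2) hbc
  · exact sub_eq_zero.mp h1

lemma t0_inj {n : ℕ} : Function.Injective (fun z : Fin n => (z.val : ℂ)) := by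
  intro a b h
  have h' : ((a.val : ℕ) : ℂ) = ((b.val : ℕ) : ℂ) := h
  exact Fin.ext (Nat.cast_injective h')

lemma t1_inj {n : ℕ} (y : Fin n) :
    Function.Injective (fun z : Fin n => if z = y then (n : ℂ) else (z.val : ℂ)) := by
  intro a b h
  simp only at h
  split_ifs at h with h1 h2 h2
  · rw [h1, h2]
  · exfalso
    have h' : ((n : ℕ) : ℂ) = ((b.val : ℕ) : ℂ) := h
    have := Nat.cast_injective h'
    have := b.isLt; omega
  · exfalso
    have h' : ((a.val : ℕ) : ℂ) = ((n : ℕ) : ℂ) := h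
    have := Nat.cast_injective h'
    have := a.isLt; omega
  · have h' : ((a.val : ℕ) : ℂ) = ((b.val : ℕ) : ℂ) := h
    exact Fin.ext (Nat.cast_injective h')

lemma move_target {n : ℕ} (σ : Equiv.Perm (Fin n)) (A B C D : Fin n)
    (hAB : A ≠ B) (hAC : A ≠ C) (hAD : A ≠ D) (hBC : B ≠ C) (hBD : B ≠ D) (hCD : C ≠ D)
    (H : ∀ t : Fin n → ℂ, Function.Injective t →
      crr (t (σ A)) (t (σ B)) (t (σ C)) (t (σ D)) = crr (t A) (t B) (t C) (t D)) :
    σ A = A ∨ σ A = B ∨ σ A = C ∨ σ A = D := by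
  by_contra hcon
  push_neg at hcon
  set y := σ A with hy
  obtain ⟨hyA, hyB, hyC, hyD⟩ := hcon
  set t0 : Fin n → ℂ := fun z => (z.val : ℂ) with ht0def
  set t1 : Fin n → ℂ := fun z => if z = y then (n : ℂ) else (z.val : ℂ) with ht1def
  have h0 := H t0 t0_inj
  have h1 := H t1 (t1_inj y)
  have hne : ∀ z : Fin n, z ≠ y → t1 z = t0 z := by
    intro z hz; simp only [ht1def, ht0def, if_neg hz]
  have hσB : σ B ≠ y := fun h => hAB (σ.injective (h.trans hy)).symm
  have hσC : σ C ≠ y := fun h => hAC (σ.injective (h.trans hy)).symm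
  have hσD : σ D ≠ y := fun h => hAD (σ.injective (h.trans hy)).symm
  rw [hne A (Ne.symm hyA), hne B (Ne.symm hyB), hne C (Ne.symm hyC), hne D (Ne.symm hyD), ← h0,
    hne _ hσB, hne _ hσC, hne _ hσD] at h1
  have ht1y : t1 y = (n : ℂ) := by simp [ht1def]
  rw [ht1y] at h1
  have hvals : ∀ u v : Fin n, u ≠ v → t0 u ≠ t0 v := fun u v huv h => huv (t0_inj h)
  have hBC' : σ B ≠ σ C := fun h => hBC (σ.injective h)
  have hBD' : σ B ≠ σ D := fun h => hBD (σ.injective h)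
  have hCD' : σ C ≠ σ D := fun h => hCD (σ.injective h)
  have hnC : (n : ℂ) ≠ t0 (σ C) := by
    intro h
    rw [ht0def] at h
    have := Nat.cast_injective (R := ℂ) h
    have := (σ C).isLt; omega
  have hyσC : y ≠ σ C := fun h => hAC (σ.injective (hy.symm.trans h))
  have hfin : (n : ℂ) = t0 y :=
    crr_inj₁ (hvals _ _ hBC') (hvals _ _ hBD') (hvals _ _ hCD') hnC (hvals _ _ hyσC) h1
  rw [ht0def] at hfin
  have := Nat.cast_injective (R := ℂ) hfin
  have := y.isLt; omega

lemma genPos_mom {n m : ℕ} (t : Fin n → ℂ) (ht : Function.Injective t) :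
    GenPos (mom t : Fin n → Fin m → ℂ) := by
  intro a ha
  rw [dA_mom]
  refine mul_ne_zero (pow_ne_zero _ (by norm_num)) ?_
  rw [Finset.prod_ne_zero_iff]
  intro i _
  rw [Finset.prod_ne_zero_iff]
  intro j hj
  exact sub_ne_zero_of_ne fun h => (Finset.mem_Ioi.mp hj).ne' (ha (ht h))

lemma dA_mom_pair {n M : ℕ} (t : Fin n → ℂ) (i : Fin M → Fin n) (j k : Fin n) :
    dA (mom t) (Fin.snoc (Fin.snoc i j) k) =
      (-1:ℂ)^(M+1) * ((∏ r : Fin M, ∏ c ∈ Finset.Ioi r, (t (i c) - t (i r)))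
        * (∏ r : Fin M, (t j - t (i r))) * (∏ r : Fin M, (t k - t (i r))) * (t k - t j)) := by
  rw [dA_mom]
  congr 1
  have h1 : (fun z => t ((Fin.snoc (Fin.snoc i j) k : Fin (M+2) → Fin n) z))
      = (Fin.snoc (Fin.snoc (fun r => t (i r)) (t j)) (t k) : Fin (M+2) → ℂ) := by
    rw [show (fun z => t ((Fin.snoc (Fin.snoc i j) k : Fin (M+2) → Fin n) z)) = t ∘ (Fin.snoc (Fin.snoc i j) k) from rfl,
      Fin.comp_snoc, Fin.comp_snoc]
    rfl
  calc (∏ z : Fin (M+2), ∏ w ∈ Finset.Ioi z,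
        (t ((Fin.snoc (Fin.snoc i j) k : Fin (M+2) → Fin n) w) - t ((Fin.snoc (Fin.snoc i j) k : Fin (M+2) → Fin n) z)))
      = ∏ z : Fin (M+2), ∏ w ∈ Finset.Ioi z,
        ((Fin.snoc (Fin.snoc (fun r => t (i r)) (t j)) (t k) : Fin (M+2) → ℂ) w
          - (Fin.snoc (Fin.snoc (fun r => t (i r)) (t j)) (t k) : Fin (M+2) → ℂ) z) := by
        have h2 : ∀ y, t ((Fin.snoc (Fin.snoc i j) k : Fin (M+2) → Fin n) y)
            = (Fin.snoc (Fin.snoc (fun r => t (i r)) (t j)) (t k) : Fin (M+2) → ℂ) y :=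
          fun y => congrFun h1 y
        simp only [h2]
    _ = _ := by
        rw [VP_snoc, VP_snoc]
        rw [Fin.prod_univ_castSucc]
        simp only [Fin.snoc_castSucc, Fin.snoc_last]
        ring

lemma ecr_mom {n M : ℕ} (t : Fin n → ℂ) (ht : Function.Injective t) (i : Fin M → Fin n)
    (j k l s : Fin n) (hi : Function.Injective i)
    (hij : ∀ r, j ≠ i r) (hik : ∀ r, k ≠ i r) (hil : ∀ r, l ≠ i r) (his : ∀ r, s ≠ i r)
    (hjl : j ≠ l) (hks : k ≠ s) :
    ecr (mom t) i j k l s = crr (t j) (t k) (t l) (t s) := by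
  have hV : (∏ r : Fin M, ∏ c ∈ Finset.Ioi r, (t (i c) - t (i r))) ≠ 0 := by
    rw [Finset.prod_ne_zero_iff]
    intro r _
    rw [Finset.prod_ne_zero_iff]
    intro c hc
    exact sub_ne_zero_of_ne fun h => (Finset.mem_Ioi.mp hc).ne' (hi (ht h))
  have hQ : ∀ x : Fin n, (∀ r, x ≠ i r) → (∏ r : Fin M, (t x - t (i r))) ≠ 0 := by
    intro x hx
    rw [Finset.prod_ne_zero_iff]
    intro r _
    exact sub_ne_zero_of_ne fun h => hx r (ht h)
  have hQj := hQ j hij; have hQk := hQ k hik; have hQl := hQ l hil; have hQs := hQ s his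
  have hjl' : t l - t j ≠ 0 := sub_ne_zero_of_ne fun h => hjl (ht h.symm)
  have hks' : t s - t k ≠ 0 := sub_ne_zero_of_ne fun h => hks (ht h.symm)
  have hε : ((-1:ℂ))^(M+1) ≠ 0 := pow_ne_zero _ (by norm_num)
  rw [ecr, dA_mom_pair, dA_mom_pair, dA_mom_pair, dA_mom_pair, crr]
  rw [div_eq_div_iff]
  · ring
  · exact mul_ne_zero (mul_ne_zero hε (by
      exact mul_ne_zero (mul_ne_zero (mul_ne_zero hV hQj) hQl) hjl'))
      (mul_ne_zero hε (mul_ne_zero (mul_ne_zero (mul_ne_zero hV hQk) hQs) hks'))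
  · exact mul_ne_zero hjl' hks'



lemma perm3 {α : Type*} [DecidableEq α] (f : α ≃ α) (a b c d : α)
    (hab : a ≠ b) (hac : a ≠ c) (had : a ≠ d)
    (hb : f b = b ∨ f b = c ∨ f b = d) (hc : f c = b ∨ f c = c ∨ f c = d)
    (hd : f d = b ∨ f d = c ∨ f d = d)
    (ha : f a = a ∨ f a = b ∨ f a = c ∨ f a = d) : f a = a := by
  have hsub : Finset.image f {b, c, d} ⊆ {b, c, d} := by
    intro x hx
    obtain ⟨z, hz, hfz⟩ := Finset.mem_image.mp hx
    subst hfz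
    simp only [Finset.mem_insert, Finset.mem_singleton] at hz ⊢
    rcases hz with rfl | rfl | rfl
    · tauto
    · tauto
    · tauto
  have hcard : ({b, c, d} : Finset α).card ≤ (Finset.image f {b, c, d}).card := by
    rw [Finset.card_image_of_injective _ f.injective]
  have hS : Finset.image f {b, c, d} = {b, c, d} := Finset.eq_of_subset_of_card_le hsub hcard
  have hnotin : f a ∉ ({b, c, d} : Finset α) := by
    intro h
    rw [← hS] at h
    obtain ⟨z, hz, hfz⟩ := Finset.mem_image.mp h
    have : z = a := f.injective hfz
    subst this
    simp only [Finset.mem_insert, Finset.mem_singleton] at hz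
    rcases hz with rfl | rfl | rfl
    · exact hab rfl
    · exact hac rfl
    · exact had rfl
  rcases ha with h | h | h | h
  · exact h
  · exact absurd (by simp [h] : f a ∈ ({b,c,d}:Finset α)) hnotin
  · exact absurd (by simp [h] : f a ∈ ({b,c,d}:Finset α)) hnotin
  · exact absurd (by simp [h] : f a ∈ ({b,c,d}:Finset α)) hnotin

set_option maxHeartbeats 2000000 in
/-- Stabilizer of the ordered normal simplex `∇₂^{m-1}` of the second type.
Here the paper's `m` is `K + 2 > 1` and `n ≥ m + 3`; indices are 0-indexed, so the
paper's `i`-th vertex, obtained from `e_{(1,...,m-1);m,m+1,m+2,m+3}` by transposing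
`i` and `m`, becomes the cross ratio with data transposed by
`swap i (K+1)` for `i : Fin (K+2)`.  A permutation `σ` fixes every vertex
(as a function on `ℰⁿ(ℂ^m, gp)`) iff `σ ∈ S({m+4,...,n})`, i.e. `σ` fixes
`1, ..., m+3` pointwise. -/
theorem stabilizer_nabla_two {n K : ℕ} (hn : K + 5 ≤ n) (σ : Equiv.Perm (Fin n)) :
    (∀ i : Fin (K + 2),
      ∀ q : Fin n → Fin (K + 2) → ℂ, GenPos q →
        ecr q (fun r : Fin (K + 1) =>
              σ (Equiv.swap (Fin.castLE (by omega) i) (⟨K + 1, by omega⟩ : Fin n)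
                (Fin.castLE (by omega) r)))
            (σ (Equiv.swap (Fin.castLE (by omega) i) (⟨K + 1, by omega⟩ : Fin n)
                ⟨K + 1, by omega⟩))
            (σ (Equiv.swap (Fin.castLE (by omega) i) (⟨K + 1, by omega⟩ : Fin n)
                ⟨K + 2, by omega⟩))
            (σ (Equiv.swap (Fin.castLE (by omega) i) (⟨K + 1, by omega⟩ : Fin n)
                ⟨K + 3, by omega⟩))
            (σ (Equiv.swap (Fin.castLE (by omega) i) (⟨K + 1, by omega⟩ : Fin n)
                ⟨K + 4, by omega⟩))
          = ecr q (fun r : Fin (K + 1) =>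
              Equiv.swap (Fin.castLE (by omega) i) (⟨K + 1, by omega⟩ : Fin n)
                (Fin.castLE (by omega) r))
            (Equiv.swap (Fin.castLE (by omega) i) (⟨K + 1, by omega⟩ : Fin n)
                ⟨K + 1, by omega⟩)
            (Equiv.swap (Fin.castLE (by omega) i) (⟨K + 1, by omega⟩ : Fin n)
                ⟨K + 2, by omega⟩)
            (Equiv.swap (Fin.castLE (by omega) i) (⟨K + 1, by omega⟩ : Fin n)
                ⟨K + 3, by omega⟩)
            (Equiv.swap (Fin.castLE (by omega) i) (⟨K + 1, by omega⟩ : Fin n)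
                ⟨K + 4, by omega⟩)) ↔
      (∀ a : Fin n, a.val ≤ K + 4 → σ a = a) := by
  have hm : K + 2 ≤ n := by omega
  have hv : K + 1 < n := by omega
  constructor
  · intro Hyp
    have hb' : K + 2 < n := by omega
    have hc' : K + 3 < n := by omega
    have hd' : K + 4 < n := by omega
    set bb : Fin n := ⟨K+2, hb'⟩ with hbbdef
    set cc : Fin n := ⟨K+3, hc'⟩ with hccdef
    set dd : Fin n := ⟨K+4, hd'⟩ with hdddef
    have Hcr : ∀ i : Fin (K + 2), ∀ t : Fin n → ℂ, Function.Injective t →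
        crr (t (σ (Fin.castLE hm i))) (t (σ bb)) (t (σ cc)) (t (σ dd))
          = crr (t (Fin.castLE hm i)) (t bb) (t cc) (t dd) := by
      intro i t ht
      have h := Hyp i (mom t) (genPos_mom t ht)
      set τ : Equiv.Perm (Fin n) := Equiv.swap (Fin.castLE hm i) (⟨K + 1, hv⟩ : Fin n) with hτdef
      have hvalτσ : ∀ (x y : Fin n), x.val ≠ y.val → σ (τ x) ≠ σ (τ y) :=
        fun x y hxy hh => hxy (congrArg Fin.val (τ.injective (σ.injective hh)))
      have hvalτ : ∀ (x y : Fin n), x.val ≠ y.val → τ x ≠ τ y :=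
        fun x y hxy hh => hxy (congrArg Fin.val (τ.injective hh))
      have hcast : ∀ r : Fin (K+1), ((Fin.castLE (show K+1 ≤ n by omega) r : Fin n)).val = r.val :=
        fun r => rfl
      have hrlt : ∀ r : Fin (K+1), r.val < K + 1 := fun r => r.isLt
      rw [ecr_mom t ht _ _ _ _ _
        (fun x y hxy => Fin.castLE_injective _ (τ.injective (σ.injective hxy)))
        (fun r => hvalτσ _ _ (by have := hrlt r; simp only [hbbdef, hccdef, hdddef, Fin.val_mk, Fin.coe_castLE]; omega))
        (fun r => hvalτσ _ _ (by have := hrlt r; simp only [hbbdef, hccdef, hdddef, Fin.val_mk, Fin.coe_castLE]; omega))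
        (fun r => hvalτσ _ _ (by have := hrlt r; simp only [hbbdef, hccdef, hdddef, Fin.val_mk, Fin.coe_castLE]; omega))
        (fun r => hvalτσ _ _ (by have := hrlt r; simp only [hbbdef, hccdef, hdddef, Fin.val_mk, Fin.coe_castLE]; omega))
        (hvalτσ _ _ (by simp only [hbbdef, hccdef, hdddef, Fin.val_mk]; omega)) (hvalτσ _ _ (by simp only [hbbdef, hccdef, hdddef, Fin.val_mk]; omega)),
        ecr_mom t ht _ _ _ _ _
        (fun x y hxy => Fin.castLE_injective _ (τ.injective hxy))
        (fun r => hvalτ _ _ (by have := hrlt r; simp only [hbbdef, hccdef, hdddef, Fin.val_mk, Fin.coe_castLE]; omega))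
        (fun r => hvalτ _ _ (by have := hrlt r; simp only [hbbdef, hccdef, hdddef, Fin.val_mk, Fin.coe_castLE]; omega))
        (fun r => hvalτ _ _ (by have := hrlt r; simp only [hbbdef, hccdef, hdddef, Fin.val_mk, Fin.coe_castLE]; omega))
        (fun r => hvalτ _ _ (by have := hrlt r; simp only [hbbdef, hccdef, hdddef, Fin.val_mk, Fin.coe_castLE]; omega))
        (hvalτ _ _ (by simp only [hbbdef, hccdef, hdddef, Fin.val_mk]; omega)) (hvalτ _ _ (by simp only [hbbdef, hccdef, hdddef, Fin.val_mk]; omega))] at h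
      have hτ1 : τ (⟨K+1, hv⟩ : Fin n) = Fin.castLE hm i := Equiv.swap_apply_right _ _
      have hτ2 : τ bb = bb := Equiv.swap_apply_of_ne_of_ne
        (by intro hh; have h2 := congrArg Fin.val hh
            simp only [hbbdef, Fin.val_mk, Fin.coe_castLE] at h2
            have := i.isLt; omega)
        (by intro hh; have h2 := congrArg Fin.val hh
            simp only [hbbdef, Fin.val_mk] at h2
            omega)
      have hτ3 : τ cc = cc := Equiv.swap_apply_of_ne_of_ne
        (by intro hh; have h2 := congrArg Fin.val hh
            simp only [hccdef, Fin.val_mk, Fin.coe_castLE] at h2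
            have := i.isLt; omega)
        (by intro hh; have h2 := congrArg Fin.val hh
            simp only [hccdef, Fin.val_mk] at h2
            omega)
      have hτ4 : τ dd = dd := Equiv.swap_apply_of_ne_of_ne
        (by intro hh; have h2 := congrArg Fin.val hh
            simp only [hdddef, Fin.val_mk, Fin.coe_castLE] at h2
            have := i.isLt; omega)
        (by intro hh; have h2 := congrArg Fin.val hh
            simp only [hdddef, Fin.val_mk] at h2
            omega)
      rw [hτ1, hτ2, hτ3, hτ4] at h
      exact h
    have hne : ∀ (x y : Fin n), x.val ≠ y.val → x ≠ y := fun x y h hh => h (congrArg Fin.val hh)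
    have hvcast : ∀ i : Fin (K+2), (Fin.castLE hm i).val = i.val := fun i => rfl
    have hvb : bb.val = K + 2 := rfl
    have hvc : cc.val = K + 3 := rfl
    have hvd : dd.val = K + 4 := rfl
    set i0 : Fin (K+2) := ⟨0, by omega⟩ with hi0def
    set i1 : Fin (K+2) := ⟨1, by omega⟩ with hi1def
    set a0 : Fin n := Fin.castLE hm i0 with ha0def
    set a1 : Fin n := Fin.castLE hm i1 with ha1def
    have hva0 : a0.val = 0 := rfl
    have hva1 : a1.val = 1 := rfl
    have hilt : ∀ i : Fin (K+2), i.val < K + 2 := fun i => i.isLt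
    -- slot-A: σ (castLE i) ∈ {castLE i, bb, cc, dd}
    have hslotA : ∀ i : Fin (K+2),
        σ (Fin.castLE hm i) = Fin.castLE hm i ∨ σ (Fin.castLE hm i) = bb ∨
        σ (Fin.castLE hm i) = cc ∨ σ (Fin.castLE hm i) = dd := by
      intro i
      exact move_target σ (Fin.castLE hm i) bb cc dd
        (hne _ _ (by rw [hvcast, hvb]; have := hilt i; omega))
        (hne _ _ (by rw [hvcast, hvc]; have := hilt i; omega))
        (hne _ _ (by rw [hvcast, hvd]; have := hilt i; omega))
        (hne _ _ (by rw [hvb, hvc]; omega))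
        (hne _ _ (by rw [hvb, hvd]; omega))
        (hne _ _ (by rw [hvc, hvd]; omega))
        (Hcr i)
    -- slot-B for bb
    have hslotB : ∀ i : Fin (K+2),
        σ bb = bb ∨ σ bb = Fin.castLE hm i ∨ σ bb = dd ∨ σ bb = cc := by
      intro i
      exact move_target σ bb (Fin.castLE hm i) dd cc
        (hne _ _ (by rw [hvcast, hvb]; have := hilt i; omega))
        (hne _ _ (by rw [hvb, hvd]; omega))
        (hne _ _ (by rw [hvb, hvc]; omega))
        (hne _ _ (by rw [hvcast, hvd]; have := hilt i; omega))
        (hne _ _ (by rw [hvcast, hvc]; have := hilt i; omega))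
        (hne _ _ (by rw [hvc, hvd]; omega))
        (fun t ht => by
          have h2 := Hcr i t ht
          rw [crr_swap₁ (t (σ (Fin.castLE hm i))), crr_swap₁ (t (Fin.castLE hm i))] at h2
          exact h2)
    have hslotC : ∀ i : Fin (K+2),
        σ cc = cc ∨ σ cc = dd ∨ σ cc = Fin.castLE hm i ∨ σ cc = bb := by
      intro i
      exact move_target σ cc dd (Fin.castLE hm i) bb
        (hne _ _ (by rw [hvc, hvd]; omega))
        (hne _ _ (by rw [hvcast, hvc]; have := hilt i; omega))
        (hne _ _ (by rw [hvb, hvc]; omega))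
        (hne _ _ (by rw [hvcast, hvd]; have := hilt i; omega))
        (hne _ _ (by rw [hvb, hvd]; omega))
        (hne _ _ (by rw [hvcast, hvb]; have := hilt i; omega))
        (fun t ht => by
          have h2 := Hcr i t ht
          rw [crr_swap₂ (t (σ (Fin.castLE hm i))), crr_swap₂ (t (Fin.castLE hm i))] at h2
          exact h2)
    have hslotD : ∀ i : Fin (K+2),
        σ dd = dd ∨ σ dd = cc ∨ σ dd = bb ∨ σ dd = Fin.castLE hm i := by
      intro i
      exact move_target σ dd cc bb (Fin.castLE hm i)
        (hne _ _ (by rw [hvc, hvd]; omega))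
        (hne _ _ (by rw [hvb, hvd]; omega))
        (hne _ _ (by rw [hvcast, hvd]; have := hilt i; omega))
        (hne _ _ (by rw [hvb, hvc]; omega))
        (hne _ _ (by rw [hvcast, hvc]; have := hilt i; omega))
        (hne _ _ (by rw [hvcast, hvb]; have := hilt i; omega))
        (fun t ht => by
          have h2 := Hcr i t ht
          rw [crr_swap₂ (t (σ (Fin.castLE hm i))), crr_swap₁ (t (σ cc)),
            crr_swap₂ (t (Fin.castLE hm i)), crr_swap₁ (t cc)] at h2
          exact h2)
    -- intersecting i0 and i1
    have h01 : a0 ≠ a1 := hne _ _ (by rw [hva0, hva1]; omega)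
    have hbX : σ bb = bb ∨ σ bb = cc ∨ σ bb = dd := by
      rcases hslotB i0 with h | h | h | h
      · exact Or.inl h
      · rcases hslotB i1 with h' | h' | h' | h'
        · exact Or.inl h'
        · exact absurd (h.symm.trans h') h01
        · exact Or.inr (Or.inr h')
        · exact Or.inr (Or.inl h')
      · exact Or.inr (Or.inr h)
      · exact Or.inr (Or.inl h)
    have hcX : σ cc = bb ∨ σ cc = cc ∨ σ cc = dd := by
      rcases hslotC i0 with h | h | h | h
      · exact Or.inr (Or.inl h)
      · exact Or.inr (Or.inr h)
      · rcases hslotC i1 with h' | h' | h' | h'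
        · exact Or.inr (Or.inl h')
        · exact Or.inr (Or.inr h')
        · exact absurd (h.symm.trans h') h01
        · exact Or.inl h'
      · exact Or.inl h
    have hdX : σ dd = bb ∨ σ dd = cc ∨ σ dd = dd := by
      rcases hslotD i0 with h | h | h | h
      · exact Or.inr (Or.inr h)
      · exact Or.inr (Or.inl h)
      · exact Or.inl h
      · rcases hslotD i1 with h' | h' | h' | h'
        · exact Or.inr (Or.inr h')
        · exact Or.inr (Or.inl h')
        · exact Or.inl h'
        · exact absurd (h.symm.trans h') h01
    have hA : ∀ i : Fin (K+2), σ (Fin.castLE hm i) = Fin.castLE hm i := by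
      intro i
      exact perm3 σ (Fin.castLE hm i) bb cc dd
        (hne _ _ (by rw [hvcast, hvb]; have := hilt i; omega))
        (hne _ _ (by rw [hvcast, hvc]; have := hilt i; omega))
        (hne _ _ (by rw [hvcast, hvd]; have := hilt i; omega))
        hbX hcX hdX (hslotA i)
    -- numeric pinning of bb, cc, dd

    have hnum : σ bb = bb ∧ σ cc = cc ∧ σ dd = dd := by
      have e0 : (((Fin.castLE hm i0 : Fin n).val : ℕ) : ℂ) = 0 := Nat.cast_zero
      have eb : ((bb.val : ℕ) : ℂ) = (K:ℂ)+2 := by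
        show (((K+2:ℕ)) : ℂ) = (K:ℂ)+2; push_cast; ring
      have ec : ((cc.val : ℕ) : ℂ) = (K:ℂ)+3 := by
        show (((K+3:ℕ)) : ℂ) = (K:ℂ)+3; push_cast; ring
      have ed : ((dd.val : ℕ) : ℂ) = (K:ℂ)+4 := by
        show (((K+4:ℕ)) : ℂ) = (K:ℂ)+4; push_cast; ring
      have z2 : (K:ℂ)+2 - 0 ≠ 0 := by
        intro hq
        have hcst : ((K+2:ℕ):ℂ) = ((0:ℕ):ℂ) := by push_cast; linear_combination hq
        exact absurd (Nat.cast_injective (R := ℂ) hcst) (by omega)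
      have z3 : (K:ℂ)+3 - 0 ≠ 0 := by
        intro hq
        have hcst : ((K+3:ℕ):ℂ) = ((0:ℕ):ℂ) := by push_cast; linear_combination hq
        exact absurd (Nat.cast_injective (R := ℂ) hcst) (by omega)
      have z4 : (K:ℂ)+4 - 0 ≠ 0 := by
        intro hq
        have hcst : ((K+4:ℕ):ℂ) = ((0:ℕ):ℂ) := by push_cast; linear_combination hq
        exact absurd (Nat.cast_injective (R := ℂ) hcst) (by omega)
      have dgen : ∀ a b : ℕ, a ≠ b → (K:ℂ)+(a:ℂ) - ((K:ℂ)+(b:ℂ)) ≠ 0 := by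
        intro a b hab hq
        have hcst : ((K+a:ℕ):ℂ) = ((K+b:ℕ):ℂ) := by push_cast; linear_combination hq
        exact absurd (Nat.cast_injective (R := ℂ) hcst) (by omega)
      have hbbne : bb ≠ cc := hne _ _ (by rw [hvb, hvc]; omega)
      have hbdne : bb ≠ dd := hne _ _ (by rw [hvb, hvd]; omega)
      have hcdne : cc ≠ dd := hne _ _ (by rw [hvc, hvd]; omega)
      have heq := Hcr i0 (fun z : Fin n => (z.val : ℂ)) t0_inj
      simp only [hA i0] at heq
      rcases hbX with hb | hb | hb
      · rcases hcX with hc | hc | hc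
        · exact absurd (σ.injective (hb.trans hc.symm)) hbbne
        · rcases hdX with hd | hd | hd
          · exact absurd (σ.injective (hb.trans hd.symm)) hbdne
          · exact absurd (σ.injective (hc.trans hd.symm)) hcdne
          · exact ⟨hb, hc, hd⟩
        · rcases hdX with hd | hd | hd
          · exact absurd (σ.injective (hb.trans hd.symm)) hbdne
          · -- P3 : (bb, dd, cc)
            exfalso
            simp only [hb, hc, hd, e0, eb, ec, ed] at heq
            rw [crr, crr, div_eq_div_iff
              (mul_ne_zero (show (K:ℂ)+4 - 0 ≠ 0 from z4) (show (K:ℂ)+3 - ((K:ℂ)+2) ≠ 0 from dgen 3 2 (by omega)))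
              (mul_ne_zero (show (K:ℂ)+3 - 0 ≠ 0 from z3) (show (K:ℂ)+4 - ((K:ℂ)+2) ≠ 0 from dgen 4 2 (by omega)))] at heq
            have hnat : ((0 : ℕ):ℂ) = (((K+2)*(K+4)+2*(K+2)*(K+3) : ℕ):ℂ) := by
              push_cast; linear_combination heq
            have hcontra := Nat.cast_injective (R := ℂ) hnat
            nlinarith [hcontra]
          · exact absurd (σ.injective (hc.trans hd.symm)) hcdne
      · rcases hcX with hc | hc | hc
        · rcases hdX with hd | hd | hd
          · exact absurd (σ.injective (hc.trans hd.symm)) hcdne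
          · exact absurd (σ.injective (hb.trans hd.symm)) hbdne
          · -- P1 : (cc, bb, dd)
            exfalso
            simp only [hb, hc, hd, e0, eb, ec, ed] at heq
            rw [crr, crr, div_eq_div_iff
              (mul_ne_zero (show (K:ℂ)+2 - 0 ≠ 0 from z2) (show (K:ℂ)+4 - ((K:ℂ)+3) ≠ 0 from dgen 4 3 (by omega)))
              (mul_ne_zero (show (K:ℂ)+3 - 0 ≠ 0 from z3) (show (K:ℂ)+4 - ((K:ℂ)+2) ≠ 0 from dgen 4 2 (by omega)))] at heq
            have hnat : ((4*(K+3)^2 : ℕ):ℂ) = (((K+2)^2 : ℕ):ℂ) := by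
              push_cast; linear_combination heq
            have hcontra := Nat.cast_injective (R := ℂ) hnat
            nlinarith [hcontra]
        · exact absurd (σ.injective (hb.trans hc.symm)) hbbne
        · rcases hdX with hd | hd | hd
          · -- P4 : (cc, dd, bb)
            exfalso
            simp only [hb, hc, hd, e0, eb, ec, ed] at heq
            rw [crr, crr, div_eq_div_iff
              (mul_ne_zero (show (K:ℂ)+4 - 0 ≠ 0 from z4) (show (K:ℂ)+2 - ((K:ℂ)+3) ≠ 0 from dgen 2 3 (by omega)))
              (mul_ne_zero (show (K:ℂ)+3 - 0 ≠ 0 from z3) (show (K:ℂ)+4 - ((K:ℂ)+2) ≠ 0 from dgen 4 2 (by omega)))] at heq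
            have hnat : ((4*(K+3)^2 : ℕ):ℂ) = (((K+2)*(K+4) : ℕ):ℂ) := by
              push_cast; linear_combination -heq
            have hcontra := Nat.cast_injective (R := ℂ) hnat
            nlinarith [hcontra]
          · exact absurd (σ.injective (hb.trans hd.symm)) hbdne
          · exact absurd (σ.injective (hc.trans hd.symm)) hcdne
      · rcases hcX with hc | hc | hc
        · rcases hdX with hd | hd | hd
          · exact absurd (σ.injective (hc.trans hd.symm)) hcdne
          · -- P5 : (dd, bb, cc)
            exfalso
            simp only [hb, hc, hd, e0, eb, ec, ed] at heq
            rw [crr, crr, div_eq_div_iff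
              (mul_ne_zero (show (K:ℂ)+2 - 0 ≠ 0 from z2) (show (K:ℂ)+3 - ((K:ℂ)+4) ≠ 0 from dgen 3 4 (by omega)))
              (mul_ne_zero (show (K:ℂ)+3 - 0 ≠ 0 from z3) (show (K:ℂ)+4 - ((K:ℂ)+2) ≠ 0 from dgen 4 2 (by omega)))] at heq
            have hnat : ((2*(K+4)*(K+3)+(K+2)^2 : ℕ):ℂ) = ((0 : ℕ):ℂ) := by
              push_cast; linear_combination heq
            have hcontra := Nat.cast_injective (R := ℂ) hnat
            nlinarith [hcontra]
          · exact absurd (σ.injective (hb.trans hd.symm)) hbdne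
        · rcases hdX with hd | hd | hd
          · -- P2 : (dd, cc, bb)
            exfalso
            simp only [hb, hc, hd, e0, eb, ec, ed] at heq
            rw [crr, crr, div_eq_div_iff
              (mul_ne_zero (show (K:ℂ)+3 - 0 ≠ 0 from z3) (show (K:ℂ)+2 - ((K:ℂ)+4) ≠ 0 from dgen 2 4 (by omega)))
              (mul_ne_zero (show (K:ℂ)+3 - 0 ≠ 0 from z3) (show (K:ℂ)+4 - ((K:ℂ)+2) ≠ 0 from dgen 4 2 (by omega)))] at heq
            have hnat : ((2*(K+4)*(K+3) : ℕ):ℂ) = ((2*(K+2)*(K+3) : ℕ):ℂ) := by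
              push_cast; linear_combination -heq
            have hcontra := Nat.cast_injective (R := ℂ) hnat
            nlinarith [hcontra]
          · exact absurd (σ.injective (hc.trans hd.symm)) hcdne
          · exact absurd (σ.injective (hb.trans hd.symm)) hbdne
        · exact absurd (σ.injective (hb.trans hc.symm)) hbbne

    obtain ⟨hfb, hfc, hfd⟩ := hnum
    intro a ha
    by_cases h1 : a.val ≤ K + 1
    · have e : Fin.castLE hm ⟨a.val, by omega⟩ = a := Fin.ext rfl
      rw [← e]
      exact hA _
    · by_cases h2 : a.val = K + 2
      · have e : a = bb := Fin.ext (by rw [hvb]; omega)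
        rw [e]; exact hfb
      · by_cases h3 : a.val = K + 3
        · have e : a = cc := Fin.ext (by rw [hvc]; omega)
          rw [e]; exact hfc
        · have e : a = dd := Fin.ext (by rw [hvd]; omega)
          rw [e]; exact hfd
  · intro h i q hq
    have hswap : ∀ z : Fin n, z.val ≤ K + 4 →
        (Equiv.swap (Fin.castLE hm i) (⟨K + 1, hv⟩ : Fin n) z).val ≤ K + 4 := by
      intro z hz
      rw [Equiv.swap_apply_def]
      split_ifs with h1 h2
      · show K + 1 ≤ K + 4; omega
      · have := i.isLt
        simp only [Fin.coe_castLE]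
        omega
      · exact hz
    have key : ∀ z : Fin n, z.val ≤ K + 4 →
        σ (Equiv.swap (Fin.castLE hm i) (⟨K + 1, hv⟩ : Fin n) z)
          = Equiv.swap (Fin.castLE hm i) (⟨K + 1, hv⟩ : Fin n) z :=
      fun z hz => h _ (hswap z hz)
    have e1 : (fun r : Fin (K + 1) =>
        σ (Equiv.swap (Fin.castLE hm i) (⟨K + 1, hv⟩ : Fin n) (Fin.castLE (by omega) r)))
        = (fun r : Fin (K + 1) =>
        Equiv.swap (Fin.castLE hm i) (⟨K + 1, hv⟩ : Fin n) (Fin.castLE (by omega) r)) :=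
      funext fun r => key _ (by have := r.isLt; simp only [Fin.coe_castLE]; omega)
    rw [e1, key ⟨K+1, by omega⟩ (show K+1 ≤ K+4 by omega),
      key ⟨K+2, by omega⟩ (show K+2 ≤ K+4 by omega),
      key ⟨K+3, by omega⟩ (show K+3 ≤ K+4 by omega),
      key ⟨K+4, by omega⟩ (show K+4 ≤ K+4 by omega)]
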